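/- If P is a graph with diam(P) ≥ 3, then the minimum size of a covering of P satisfying condition A equals 2. Explicitly, if e(x) ≥ 3 for some vertex x, then {N[x], V(P) − N[x]} is such a covering. -/

import Mathlib

open SimpleGraph

variable {V : Type*} {ι : Type*}

/-- Eccentricity (in `ℕ∞`) of a vertex. -/
noncomputable def gecc (G : SimpleGraph V) (v : V) : ℕ∞ := ⨆ u, G.edist v u

/-- Radius of a graph. -/
noncomputable def grad (G : SimpleGraph V) : ℕ∞ := ⨅ v, gecc G v

/-- Diameter of a graph. -/
noncomputable def gdiam (G : SimpleGraph V) : ℕ∞ := ⨆ v, gecc G v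

/-- The center: vertices of minimum eccentricity. -/
def gcenter (G : SimpleGraph V) : Set V := {v | gecc G v = grad G}

/-- Eccentric vertices of `v`. -/
def eccSet (G : SimpleGraph V) (v : V) : Set V := {u | G.edist v u = gecc G v}

/-- The centered periphery. -/
def cperiph (G : SimpleGraph V) : Set V := ⋃ z ∈ gcenter G, eccSet G z

/-- Uniform central graph. -/
def IsUCG (G : SimpleGraph V) : Prop := ∀ c ∈ gcenter G, eccSet G c = cperiph G

/-- Condition A. -/
def CondA (G : SimpleGraph V) (P : ι → Set V) : Prop :=
  ∀ i, ∃ p, p ∉ P i ∧ ∀ q ∈ P i, 2 ≤ G.edist q p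

/-- Condition B. -/
def CondB (G : SimpleGraph V) (P : ι → Set V) : Prop :=
  ∀ i, ∀ p ∈ P i,
    (∃ p', p' ∉ P i ∧ 3 ≤ G.edist p p') ∨ (∃ j, j ≠ i ∧ ∀ q ∈ P j, 2 ≤ G.edist p q)

/-- Condition A′. -/
def CondA' (G : SimpleGraph V) (P : ι → Set V) : Prop :=
  ∀ i, (∃ p, p ∉ P i ∧ ∀ q ∈ P i, 3 ≤ G.edist q p) ∨
    (∃ j, j ≠ i ∧ ∀ q ∈ P i, ∀ q' ∈ P j, 2 ≤ G.edist q q')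

/-- Condition B′. -/
def CondB' (G : SimpleGraph V) (P : ι → Set V) : Prop :=
  ∀ i, ∀ p ∈ P i, ∃ j, j ≠ i ∧ ∀ q ∈ P j, 2 ≤ G.edist p q

/-- Minimum size of a covering satisfying condition A. -/
noncomputable def covA (G : SimpleGraph V) : ℕ :=
  sInf {k | ∃ P : Fin k → Set V, (⋃ i, P i) = Set.univ ∧ CondA G P}

/-- Minimum size of a covering satisfying conditions A and B. -/
noncomputable def covAB (G : SimpleGraph V) : ℕ :=
  sInf {k | ∃ P : Fin k → Set V, (⋃ i, P i) = Set.univ ∧ CondA G P ∧ CondB G P}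

/-- Distance from a vertex to the center. -/
noncomputable def distToCenter (G : SimpleGraph V) (u : V) : ℕ∞ :=
  ⨅ z ∈ gcenter G, G.edist u z

/-- The set of vertices at distance exactly `m` from the center. -/
def Dlevel (G : SimpleGraph V) (m : ℕ) : Set V := {u | distToCenter G u = (m : ℕ∞)}

/-- Vertices of the centered periphery lying on a radial path through `x`. -/
def Pset (G : SimpleGraph V) (r : ℕ) (x : V) : Set V :=
  {p | p ∈ cperiph G ∧ ∃ c ∈ gcenter G, ∃ W : G.Walk c p,
    W.IsPath ∧ W.length = r ∧ x ∈ W.support}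

/-- All vertices lying on some radial path through `x`. -/
def radialSupport (G : SimpleGraph V) (r : ℕ) (x : V) : Set V :=
  {u | ∃ c ∈ gcenter G, ∃ p ∈ cperiph G, ∃ W : G.Walk c p,
    W.IsPath ∧ W.length = r ∧ x ∈ W.support ∧ u ∈ W.support}

lemma edist_le_one_cases (G : SimpleGraph V) {u v : V} (h : G.edist u v ≤ 1) :
    u = v ∨ G.Adj u v := by
  rcases lt_or_eq_of_le h with h1 | h1
  · left
    have h0 : G.edist u v ≤ 0 := Order.le_of_lt_add_one (by simpa using h1)
    exact SimpleGraph.edist_eq_zero_iff.mp (le_antisymm h0 (by simp))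
  · exact Or.inr (SimpleGraph.edist_eq_one_iff_adj.mp h1)

lemma two_le_of_not_mem (G : SimpleGraph V) {x v : V}
    (h : v ∉ insert x (G.neighborSet x)) : 2 ≤ G.edist x v := by
  simp only [Set.mem_insert_iff, SimpleGraph.mem_neighborSet, not_or] at h
  by_contra hlt
  push_neg at hlt
  have h1 : G.edist x v ≤ 1 := (by simpa using hlt)
  rcases edist_le_one_cases G h1 with h0 | h0
  · exact h.1 h0.symm
  · exact h.2 h0

lemma mem_nbhd_edist_le_one (G : SimpleGraph V) {x q : V}
    (h : q ∈ insert x (G.neighborSet x)) : G.edist x q ≤ 1 := by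
  rcases h with h | h
  · subst h; simp
  · exact le_of_eq (SimpleGraph.edist_eq_one_iff_adj.mpr h)

lemma stmt14_aux (G : SimpleGraph V) (x : V) (hx : 3 ≤ gecc G x) :
    (⋃ i, (![insert x (G.neighborSet x), (insert x (G.neighborSet x))ᶜ] : Fin 2 → Set V) i)
        = Set.univ ∧
      CondA G ![insert x (G.neighborSet x), (insert x (G.neighborSet x))ᶜ] := by
  obtain ⟨p, hp⟩ : ∃ p, 2 < G.edist x p := by
    have h2 : (2 : ℕ∞) < gecc G x := lt_of_lt_of_le (by norm_num) hx
    exact lt_iSup_iff.mp h2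
  have hp3 : 3 ≤ G.edist x p := Order.add_one_le_of_lt hp
  constructor
  · ext v
    simp only [Set.mem_iUnion, Set.mem_univ, iff_true, Fin.exists_fin_two]
    by_cases hv : v ∈ insert x (G.neighborSet x)
    · exact Or.inl (by simpa using hv)
    · exact Or.inr (by simpa using hv)
  · intro i
    fin_cases i
    · refine ⟨p, ?_, ?_⟩
      · intro hmem
        have := mem_nbhd_edist_le_one G (by simpa using hmem)
        exact absurd hp3 (not_le.mpr (lt_of_le_of_lt this (by norm_num : (1:ℕ∞) < 3)))
      · intro q hq
        have hq1 : G.edist x q ≤ 1 := mem_nbhd_edist_le_one G (by simpa using hq)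
        by_contra hlt
        push_neg at hlt
        have h1 : G.edist q p ≤ 1 := (by simpa using hlt)
        have := G.edist_triangle (u := x) (v := q) (w := p)
        have h2 : G.edist x p ≤ 2 := le_trans this (by
          calc G.edist x q + G.edist q p ≤ 1 + 1 := add_le_add hq1 h1
          _ = 2 := by norm_num)
        exact absurd (lt_of_le_of_lt h2 (by norm_num)) (not_lt.mpr hp3)
    · refine ⟨x, by simp, fun q hq => ?_⟩
      rw [SimpleGraph.edist_comm]
      exact two_le_of_not_mem G (by simpa using hq)

/-- If `diam(P) ≥ 3` then `cov_A(P) = 2`; explicitly, if `e(x) ≥ 3` then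
`{N[x], V(P) − N[x]}` is a covering satisfying condition A. -/
theorem stmt14 (G : SimpleGraph V) :
    (3 ≤ gdiam G → covA G = 2) ∧
    ∀ x : V, 3 ≤ gecc G x →
      (⋃ i, (![insert x (G.neighborSet x), (insert x (G.neighborSet x))ᶜ] : Fin 2 → Set V) i)
        = Set.univ ∧
      CondA G ![insert x (G.neighborSet x), (insert x (G.neighborSet x))ᶜ] := by

  have key := stmt14_aux G
  refine ⟨?_, key⟩
  intro hdiam
  obtain ⟨x, hx⟩ : ∃ x, 2 < gecc G x :=
    lt_iSup_iff.mp (lt_of_lt_of_le (by norm_num : (2:ℕ∞) < 3) hdiam)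
  have hx3 : 3 ≤ gecc G x := Order.add_one_le_of_lt hx
  obtain ⟨hcov, hA⟩ := key x hx3
  refine le_antisymm (Nat.sInf_le ⟨_, hcov, hA⟩) ?_
  refine le_csInf ⟨2, _, hcov, hA⟩ ?_
  rintro k ⟨P, hP, hCA⟩
  by_contra hk
  push_neg at hk
  interval_cases k
  · have : x ∈ (⋃ i : Fin 0, P i) := hP ▸ Set.mem_univ x
    simp at this
  · have hP0 : P 0 = Set.univ := by
      ext v
      simp only [Set.mem_univ, iff_true]
      have : v ∈ ⋃ i : Fin 1, P i := hP ▸ Set.mem_univ v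
      obtain ⟨i, hi⟩ := Set.mem_iUnion.mp this
      exact Fin.fin_one_eq_zero i ▸ hi
    obtain ⟨p, hpn, -⟩ := hCA 0
    exact hpn (hP0 ▸ Set.mem_univ p)
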